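/- Suppose $M^1$ and $M^2$ are ultra matrices with equal diagonals. Then the subdominant ultrametrics $\widehat{M^\lambda}$ of the convex combinations $M^\lambda = (1-\lambda)M^1 + \lambda M^2$ form a geodesic in the space of ultra matrices with the $L_\infty$ metric: $\|\widehat{M^\lambda} - \widehat{M^\mu}\|_\infty = |\lambda - \mu| \cdot \|M^1 - M^2\|_\infty$ for all $\lambda, \mu \in [0,1]$, noting $\widehat{M^0} = M^1$ and $\widehat{M^1} = M^2$. -/

import Mathlib

def ValidM {n : ℕ} (M : Fin n → Fin n → ℝ) : Prop :=
  (∀ i j, M i j = M j i) ∧ (∀ i j, M i i ≤ M i j)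

def UltraM {n : ℕ} (M : Fin n → Fin n → ℝ) : Prop :=
  ValidM M ∧ ∀ i j k, M i j ≤ max (M i k) (M k j)

noncomputable def linf {n : ℕ} (A B : Fin (n + 1) → Fin (n + 1) → ℝ) : ℝ :=
  Finset.univ.sup' Finset.univ_nonempty
    (fun p : Fin (n + 1) × Fin (n + 1) => |A p.1 p.2 - B p.1 p.2|)

def pathCost {n : ℕ} (M : Fin n → Fin n → ℝ) : Fin n → List (Fin n) → Fin n → ℝ
  | i, [], j => M i j
  | i, v :: l, j => max (M i v) (pathCost M v l j)

noncomputable def subUltra {n : ℕ} (M : Fin n → Fin n → ℝ) (i j : Fin n) : ℝ :=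
  if i = j then M i i else sInf (Set.range fun l : List (Fin n) => pathCost M i l j)

namespace SGaux

variable {n : ℕ}

lemma entry_le_linf (A B : Fin (n + 1) → Fin (n + 1) → ℝ) (i j : Fin (n + 1)) :
    |A i j - B i j| ≤ linf A B :=
  Finset.le_sup' (f := fun p : Fin (n + 1) × Fin (n + 1) => |A p.1 p.2 - B p.1 p.2|)
    (Finset.mem_univ (i, j))

lemma linf_comm (A B : Fin (n + 1) → Fin (n + 1) → ℝ) : linf A B = linf B A := by
  unfold linf
  congr 1
  funext p
  rw [abs_sub_comm]

lemma linf_triangle (A B C : Fin (n + 1) → Fin (n + 1) → ℝ) :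
    linf A C ≤ linf A B + linf B C := by
  apply Finset.sup'_le
  intro p _
  calc |A p.1 p.2 - C p.1 p.2|
      ≤ |A p.1 p.2 - B p.1 p.2| + |B p.1 p.2 - C p.1 p.2| := abs_sub_le _ _ _
    _ ≤ linf A B + linf B C := add_le_add (entry_le_linf A B _ _) (entry_le_linf B C _ _)

lemma pathCost_ge_diag {M : Fin n → Fin n → ℝ} (hM : ValidM M) :
    ∀ (i : Fin n) (l : List (Fin n)) (j : Fin n), M i i ≤ pathCost M i l j
  | i, [], j => hM.2 i j
  | i, v :: l, j => le_max_of_le_left (hM.2 i v)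

lemma pathCost_ge_ultra {M : Fin n → Fin n → ℝ} (hM : UltraM M) :
    ∀ (i : Fin n) (l : List (Fin n)) (j : Fin n), M i j ≤ pathCost M i l j
  | i, [], j => le_refl _
  | i, v :: l, j =>
    le_trans (hM.2 i j v) (max_le_max (le_refl _) (pathCost_ge_ultra hM v l j))

lemma subUltra_eq_self {M : Fin n → Fin n → ℝ} (hM : UltraM M) : subUltra M = M := by
  funext i j
  unfold subUltra
  by_cases hij : i = j
  · simp [hij]
  · simp only [hij, if_false]
    apply le_antisymm
    · exact csInf_le ⟨M i j, by rintro x ⟨l, rfl⟩; exact pathCost_ge_ultra hM i l j⟩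
        ⟨[], rfl⟩
    · exact le_csInf ⟨_, ⟨[], rfl⟩⟩ (by rintro x ⟨l, rfl⟩; exact pathCost_ge_ultra hM i l j)

lemma pathCost_lipschitz {A B : Fin n → Fin n → ℝ} {D : ℝ}
    (h : ∀ p q, |A p q - B p q| ≤ D) :
    ∀ (i : Fin n) (l : List (Fin n)) (j : Fin n),
      |pathCost A i l j - pathCost B i l j| ≤ D
  | i, [], j => h i j
  | i, v :: l, j =>
    le_trans (abs_max_sub_max_le_max _ _ _ _)
      (max_le (h i v) (pathCost_lipschitz h v l j))

lemma subUltra_lipschitz {A B : Fin (n + 1) → Fin (n + 1) → ℝ}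
    (hA : ValidM A) (hB : ValidM B) (i j : Fin (n + 1)) :
    |subUltra A i j - subUltra B i j| ≤ linf A B := by
  have h : ∀ p q, |A p q - B p q| ≤ linf A B := fun p q => entry_le_linf A B p q
  unfold subUltra
  by_cases hij : i = j
  · simp only [hij, if_true]; exact h j j
  · simp only [hij, if_false]
    have bddA : BddBelow (Set.range fun l : List (Fin (n + 1)) => pathCost A i l j) :=
      ⟨A i i, by rintro x ⟨l, rfl⟩; exact pathCost_ge_diag hA i l j⟩
    have bddB : BddBelow (Set.range fun l : List (Fin (n + 1)) => pathCost B i l j) :=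
      ⟨B i i, by rintro x ⟨l, rfl⟩; exact pathCost_ge_diag hB i l j⟩
    have neA : (Set.range fun l : List (Fin (n + 1)) => pathCost A i l j).Nonempty :=
      ⟨_, ⟨[], rfl⟩⟩
    have neB : (Set.range fun l : List (Fin (n + 1)) => pathCost B i l j).Nonempty :=
      ⟨_, ⟨[], rfl⟩⟩
    have c1 : sInf (Set.range fun l : List (Fin (n + 1)) => pathCost A i l j) - linf A B
        ≤ sInf (Set.range fun l : List (Fin (n + 1)) => pathCost B i l j) := by
      apply le_csInf neB
      rintro x ⟨l, rfl⟩
      have h1 : sInf (Set.range fun l : List (Fin (n + 1)) => pathCost A i l j)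
          ≤ pathCost A i l j := csInf_le bddA ⟨l, rfl⟩
      have h2 := abs_le.1 (pathCost_lipschitz (fun p q => entry_le_linf A B p q) i l j)
      linarith
    have c2 : sInf (Set.range fun l : List (Fin (n + 1)) => pathCost B i l j) - linf A B
        ≤ sInf (Set.range fun l : List (Fin (n + 1)) => pathCost A i l j) := by
      apply le_csInf neA
      rintro x ⟨l, rfl⟩
      have h1 : sInf (Set.range fun l : List (Fin (n + 1)) => pathCost B i l j)
          ≤ pathCost B i l j := csInf_le bddB ⟨l, rfl⟩
      have h2 := abs_le.1 (pathCost_lipschitz (fun p q => entry_le_linf A B p q) i l j)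
      linarith
    rw [abs_sub_le_iff]
    constructor <;> linarith

lemma linf_subUltra_le {A B : Fin (n + 1) → Fin (n + 1) → ℝ}
    (hA : ValidM A) (hB : ValidM B) :
    linf (subUltra A) (subUltra B) ≤ linf A B :=
  Finset.sup'_le _ _ fun p _ => subUltra_lipschitz hA hB p.1 p.2

lemma valid_comb {M₁ M₂ : Fin (n + 1) → Fin (n + 1) → ℝ}
    (h₁ : UltraM M₁) (h₂ : UltraM M₂) {lam : ℝ} (hlam : lam ∈ Set.Icc (0 : ℝ) 1) :
    ValidM (fun i j => (1 - lam) * M₁ i j + lam * M₂ i j) := by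
  obtain ⟨h0, h1⟩ := hlam
  constructor
  · intro i j; simp only [h₁.1.1 i j, h₂.1.1 i j]
  · intro i j
    have a := h₁.1.2 i j
    have b := h₂.1.2 i j
    have : (0:ℝ) ≤ 1 - lam := by linarith
    dsimp only
    nlinarith

lemma linf_comb (M₁ M₂ : Fin (n + 1) → Fin (n + 1) → ℝ) (lam mu : ℝ) :
    linf (fun i j => (1 - lam) * M₁ i j + lam * M₂ i j)
      (fun i j => (1 - mu) * M₁ i j + mu * M₂ i j) = |lam - mu| * linf M₁ M₂ := by
  have key : ∀ p : Fin (n + 1) × Fin (n + 1),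
      |((1 - lam) * M₁ p.1 p.2 + lam * M₂ p.1 p.2)
        - ((1 - mu) * M₁ p.1 p.2 + mu * M₂ p.1 p.2)|
      = |lam - mu| * |M₁ p.1 p.2 - M₂ p.1 p.2| := by
    intro p
    have : ((1 - lam) * M₁ p.1 p.2 + lam * M₂ p.1 p.2)
        - ((1 - mu) * M₁ p.1 p.2 + mu * M₂ p.1 p.2)
        = (lam - mu) * (M₂ p.1 p.2 - M₁ p.1 p.2) := by ring
    rw [this, abs_mul, abs_sub_comm (M₂ p.1 p.2)]
  unfold linf
  rw [Finset.sup'_congr Finset.univ_nonempty rfl (fun p _ => key p)]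
  exact (Finset.comp_sup'_eq_sup'_comp Finset.univ_nonempty
    (fun x => |lam - mu| * x)
    (fun x y => mul_max_of_nonneg x y (abs_nonneg _))).symm

end SGaux

/-- For ultra matrices `M₁, M₂` with equal diagonals, the subdominant ultrametrics of the
convex combinations `M^λ = (1-λ)M₁ + λM₂` form a geodesic in the space of ultra matrices
with the `L∞` metric, with endpoints `M₁` and `M₂`. -/
theorem subdominant_geodesic {n : ℕ} (M₁ M₂ : Fin (n + 1) → Fin (n + 1) → ℝ)
    (h₁ : UltraM M₁) (h₂ : UltraM M₂) (hdiag : ∀ i, M₁ i i = M₂ i i) :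
    (∀ lam mu : ℝ, lam ∈ Set.Icc (0 : ℝ) 1 → mu ∈ Set.Icc (0 : ℝ) 1 →
      linf (subUltra fun i j => (1 - lam) * M₁ i j + lam * M₂ i j)
          (subUltra fun i j => (1 - mu) * M₁ i j + mu * M₂ i j)
        = |lam - mu| * linf M₁ M₂) ∧
    (subUltra fun i j => (1 - (0 : ℝ)) * M₁ i j + (0 : ℝ) * M₂ i j) = M₁ ∧
    (subUltra fun i j => (1 - (1 : ℝ)) * M₁ i j + (1 : ℝ) * M₂ i j) = M₂ := by
  have e0 : (fun i j => (1 - (0 : ℝ)) * M₁ i j + (0 : ℝ) * M₂ i j) = M₁ := by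
    funext i j; ring
  have e1 : (fun i j => (1 - (1 : ℝ)) * M₁ i j + (1 : ℝ) * M₂ i j) = M₂ := by
    funext i j; ring
  set D := linf M₁ M₂ with hD
  -- upper bound, and the lower bound for `lam ≤ mu`
  have upper : ∀ lam mu : ℝ, lam ∈ Set.Icc (0 : ℝ) 1 → mu ∈ Set.Icc (0 : ℝ) 1 →
      linf (subUltra fun i j => (1 - lam) * M₁ i j + lam * M₂ i j)
          (subUltra fun i j => (1 - mu) * M₁ i j + mu * M₂ i j) ≤ |lam - mu| * D := by
    intro lam mu hlam hmu
    calc linf (subUltra fun i j => (1 - lam) * M₁ i j + lam * M₂ i j)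
          (subUltra fun i j => (1 - mu) * M₁ i j + mu * M₂ i j)
        ≤ linf (fun i j => (1 - lam) * M₁ i j + lam * M₂ i j)
            (fun i j => (1 - mu) * M₁ i j + mu * M₂ i j) :=
          SGaux.linf_subUltra_le (SGaux.valid_comb h₁ h₂ hlam) (SGaux.valid_comb h₁ h₂ hmu)
      _ = |lam - mu| * D := SGaux.linf_comb M₁ M₂ lam mu
  have lower : ∀ lam mu : ℝ, lam ∈ Set.Icc (0 : ℝ) 1 → mu ∈ Set.Icc (0 : ℝ) 1 →
      lam ≤ mu →
      |lam - mu| * D ≤ linf (subUltra fun i j => (1 - lam) * M₁ i j + lam * M₂ i j)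
          (subUltra fun i j => (1 - mu) * M₁ i j + mu * M₂ i j) := by
    intro lam mu hlam hmu hle
    have h0mem : (0 : ℝ) ∈ Set.Icc (0 : ℝ) 1 := ⟨le_refl _, zero_le_one⟩
    have h1mem : (1 : ℝ) ∈ Set.Icc (0 : ℝ) 1 := ⟨zero_le_one, le_refl _⟩
    have hS0 : (subUltra fun i j => (1 - (0 : ℝ)) * M₁ i j + (0 : ℝ) * M₂ i j) = M₁ := by
      rw [e0, SGaux.subUltra_eq_self h₁]
    have hS1 : (subUltra fun i j => (1 - (1 : ℝ)) * M₁ i j + (1 : ℝ) * M₂ i j) = M₂ := by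
      rw [e1, SGaux.subUltra_eq_self h₂]
    have t1 : linf M₁ (subUltra fun i j => (1 - lam) * M₁ i j + lam * M₂ i j) ≤ lam * D := by
      have := upper 0 lam h0mem hlam
      rw [hS0] at this
      have habs : |(0 : ℝ) - lam| = lam := by
        rw [abs_sub_comm, sub_zero, abs_of_nonneg hlam.1]
      rwa [habs] at this
    have t2 : linf (subUltra fun i j => (1 - mu) * M₁ i j + mu * M₂ i j) M₂
        ≤ (1 - mu) * D := by
      have := upper mu 1 hmu h1mem
      rw [hS1] at this
      have habs : |mu - 1| = 1 - mu := by rw [abs_sub_comm, abs_of_nonneg (by linarith [hmu.2])]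
      rwa [habs] at this
    have tri : D ≤ linf M₁ (subUltra fun i j => (1 - lam) * M₁ i j + lam * M₂ i j)
        + (linf (subUltra fun i j => (1 - lam) * M₁ i j + lam * M₂ i j)
            (subUltra fun i j => (1 - mu) * M₁ i j + mu * M₂ i j)
          + linf (subUltra fun i j => (1 - mu) * M₁ i j + mu * M₂ i j) M₂) :=
      le_trans (SGaux.linf_triangle M₁ _ M₂)
        (add_le_add le_rfl (SGaux.linf_triangle _ _ M₂))
    have habs : |lam - mu| = mu - lam := by
      rw [abs_sub_comm, abs_of_nonneg (by linarith)]
    rw [habs]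
    nlinarith
  refine ⟨?_, by rw [e0]; exact SGaux.subUltra_eq_self h₁,
    by rw [e1]; exact SGaux.subUltra_eq_self h₂⟩
  intro lam mu hlam hmu
  rcases le_total lam mu with hle | hle
  · exact le_antisymm (upper lam mu hlam hmu) (lower lam mu hlam hmu hle)
  · have := le_antisymm (upper mu lam hmu hlam) (lower mu lam hmu hlam hle)
    rw [SGaux.linf_comm, this, abs_sub_comm]
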